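/- Von Neumann Minimax Theorem (saddle point form): for every real m × n matrix A (m, n ≥ 1) there exist mixed strategies x* in the simplex Δ_m and y* in the simplex Δ_n such that for all x ∈ Δ_m and all y ∈ Δ_n, xᵀ A y* ≤ x*ᵀ A y* ≤ x*ᵀ A y; consequently max_{x ∈ Δ_m} min_{y ∈ Δ_n} xᵀ A y = min_{y ∈ Δ_n} max_{x ∈ Δ_m} xᵀ A y. -/

import Mathlib

open Finset Matrix

private lemma vn_dot_le_sup' {k : ℕ} [NeZero k] (x z : Fin k → ℝ)
    (hx : x ∈ stdSimplex ℝ (Fin k)) :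
    x ⬝ᵥ z ≤ univ.sup' univ_nonempty z := by
  calc x ⬝ᵥ z = ∑ i, x i * z i := rfl
    _ ≤ ∑ i, x i * univ.sup' univ_nonempty z := by
        refine Finset.sum_le_sum fun i _ => ?_
        exact mul_le_mul_of_nonneg_left (Finset.le_sup' z (mem_univ i)) (hx.1 i)
    _ = univ.sup' univ_nonempty z := by rw [← Finset.sum_mul, hx.2, one_mul]

private lemma vn_inf'_le_dot {k : ℕ} [NeZero k] (y z : Fin k → ℝ)
    (hy : y ∈ stdSimplex ℝ (Fin k)) :
    univ.inf' univ_nonempty z ≤ z ⬝ᵥ y := by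
  calc univ.inf' univ_nonempty z = ∑ i, univ.inf' univ_nonempty z * y i := by
        rw [← Finset.mul_sum, hy.2, mul_one]
    _ ≤ ∑ i, z i * y i := by
        refine Finset.sum_le_sum fun i _ => ?_
        exact mul_le_mul_of_nonneg_right (Finset.inf'_le z (mem_univ i)) (hy.1 i)
    _ = z ⬝ᵥ y := rfl

private lemma vn_saddle {m n : ℕ} [NeZero m] [NeZero n] (A : Matrix (Fin m) (Fin n) ℝ) :
    ∃ xs ∈ stdSimplex ℝ (Fin m), ∃ ys ∈ stdSimplex ℝ (Fin n), ∃ v : ℝ,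
      (∀ x ∈ stdSimplex ℝ (Fin m), x ⬝ᵥ A *ᵥ ys ≤ v) ∧
      (∀ y ∈ stdSimplex ℝ (Fin n), v ≤ xs ⬝ᵥ A *ᵥ y) := by
  -- upper function  G y = max_i (A y)_i  and lower function  g x = min_j (xᵀA)_j
  set G : (Fin n → ℝ) → ℝ := fun y => univ.sup' univ_nonempty (A *ᵥ y) with hG
  set g : (Fin m → ℝ) → ℝ := fun x => univ.inf' univ_nonempty (x ᵥ* A) with hg
  have hGc : Continuous G := by
    rw [continuous_iff_continuousAt]
    intro y
    exact ContinuousAt.finset_sup'_apply univ_nonempty fun i _ =>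
      (Continuous.continuousAt (by continuity : Continuous fun y : Fin n → ℝ => (A *ᵥ y) i))
  have hgc : Continuous g := by
    rw [continuous_iff_continuousAt]
    intro x
    exact ContinuousAt.finset_inf'_apply univ_nonempty fun j _ =>
      (Continuous.continuousAt (by continuity : Continuous fun x : Fin m → ℝ => (x ᵥ* A) j))
  have hne_m : (stdSimplex ℝ (Fin m)).Nonempty := ⟨_, single_mem_stdSimplex ℝ (Classical.arbitrary (Fin m))⟩
  have hne_n : (stdSimplex ℝ (Fin n)).Nonempty := ⟨_, single_mem_stdSimplex ℝ (Classical.arbitrary (Fin n))⟩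
  obtain ⟨ys, hys, hysmin⟩ := isCompact_stdSimplex ℝ (Fin n) |>.exists_isMinOn hne_n hGc.continuousOn
  obtain ⟨xs, hxs, hxsmax⟩ := isCompact_stdSimplex ℝ (Fin m) |>.exists_isMaxOn hne_m hgc.continuousOn
  set w := G ys with hw
  set v := g xs with hv
  have hdot : ∀ (x : Fin m → ℝ) (y : Fin n → ℝ), x ⬝ᵥ A *ᵥ y = (x ᵥ* A) ⬝ᵥ y :=
    fun x y => Matrix.dotProduct_mulVec x A y
  have hvw : v ≤ w := by
    have h1 : v ≤ xs ⬝ᵥ A *ᵥ ys := by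
      rw [hdot]; exact vn_inf'_le_dot ys (xs ᵥ* A) hys
    have h2 : xs ⬝ᵥ A *ᵥ ys ≤ w := vn_dot_le_sup' xs (A *ᵥ ys) hxs
    linarith
  -- key step : w ≤ v by separation
  have hwv : w ≤ v := by
    by_contra hlt
    push_neg at hlt
    set c := (v + w) / 2 with hc
    have hcv : v < c := by simp [hc]; linarith
    have hcw : c < w := by simp [hc]; linarith
    set S : Set (Fin m → ℝ) := (fun y => A *ᵥ y) '' stdSimplex ℝ (Fin n) with hS
    set O : Set (Fin m → ℝ) := {z | ∀ i, z i ≤ c} with hO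
    have hOconv : Convex ℝ O := by
      intro a ha b hb s t hs ht hst
      intro i
      have := ha i; have := hb i
      calc s * a i + t * b i ≤ s * c + t * c := by
            apply add_le_add (mul_le_mul_of_nonneg_left ‹a i ≤ c› hs)
              (mul_le_mul_of_nonneg_left ‹b i ≤ c› ht)
        _ = c := by rw [← add_mul, hst, one_mul]
    have hOclosed : IsClosed O := by
      have : O = ⋂ i, {z : Fin m → ℝ | z i ≤ c} := by ext z; simp [hO]
      rw [this]
      exact isClosed_iInter fun i => isClosed_le (continuous_apply i) continuous_const
    have hfun : (fun y : Fin n → ℝ => A *ᵥ y) = ⇑A.mulVecLin :=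
      funext fun y => (Matrix.mulVecLin_apply A y).symm
    have hSconv : Convex ℝ S := by
      rw [hS, hfun]; exact (convex_stdSimplex ℝ (Fin n)).linear_image A.mulVecLin
    have hScomp : IsCompact S := by
      rw [hS, hfun]
      exact (isCompact_stdSimplex ℝ (Fin n)).image A.mulVecLin.continuous_of_finiteDimensional
    have hdisj : Disjoint O S := by
      rw [Set.disjoint_right]
      rintro z ⟨y, hy, rfl⟩ hzO
      have hwGy : w ≤ G y := hysmin hy
      have : c < univ.sup' univ_nonempty (A *ᵥ y) := lt_of_lt_of_le hcw hwGy
      rw [Finset.lt_sup'_iff] at this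
      obtain ⟨i, _, hi⟩ := this
      exact absurd (hzO i) (not_le.mpr hi)
    obtain ⟨f, u, v', hfO, huv', hfS⟩ :=
      geometric_hahn_banach_closed_compact hOconv hOclosed hSconv hScomp hdisj
    set φ : Fin m → ℝ := fun i => f (Pi.single i 1) with hφ
    have hfeq : ∀ z : Fin m → ℝ, f z = ∑ i, z i * φ i := by
      intro z
      conv_lhs => rw [← Finset.univ_sum_single z]
      rw [map_sum]
      refine Finset.sum_congr rfl fun i _ => ?_
      have : Pi.single i (z i) = z i • (Pi.single i (1 : ℝ) : Fin m → ℝ) := by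
        funext k; simp only [Pi.smul_apply, Pi.single_apply, smul_eq_mul]
        split <;> simp
      rw [this, _root_.map_smul, smul_eq_mul, hφ]
    have hcO : (fun _ : Fin m => c) ∈ O := fun i => le_refl c
    have hfc : f (fun _ => c) = c * ∑ i, φ i := by
      rw [hfeq]; rw [Finset.mul_sum]
    have hφnn : ∀ i, 0 ≤ φ i := by
      by_contra hcon
      push_neg at hcon
      obtain ⟨i, hi⟩ := hcon
      set t := (|u| + |f (fun _ => c)| + 1) / (-φ i) with ht
      have htpos : 0 < t := div_pos (by positivity) (by linarith)
      set z : Fin m → ℝ := (fun _ => c) + Pi.single i (-t) with hz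
      have hzO : z ∈ O := by
        intro k
        simp only [hz, Pi.add_apply, Pi.single_apply]
        split <;> [linarith; simp]
      have hfz : f z = f (fun _ => c) + (-t) * φ i := by
        rw [hz, map_add]
        congr 1
        have : Pi.single i (-t) = (-t) • (Pi.single i (1 : ℝ) : Fin m → ℝ) := by
          funext k; simp only [Pi.smul_apply, Pi.single_apply, smul_eq_mul]
          split <;> simp
        rw [this, _root_.map_smul, smul_eq_mul]
      have h1 : f z < u := hfO z hzO
      have hne : -φ i ≠ 0 := ne_of_gt (by linarith)
      have h2' : t * (-φ i) = |u| + |f (fun _ => c)| + 1 :=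
        div_mul_cancel₀ _ hne
      have h2 : (-t) * φ i = |u| + |f (fun _ => c)| + 1 :=
        (neg_mul_comm t (φ i)).trans h2'
      have h3 := abs_nonneg u
      have h4 := le_abs_self u
      have h5 := neg_abs_le (f (fun _ => c))
      rw [hfz, h2] at h1
      linarith
    have hsum : 0 < ∑ i, φ i := by
      rcases (Finset.sum_nonneg fun i _ => hφnn i).lt_or_eq with h | h
      · exact h
      · exfalso
        have hall : ∀ i ∈ univ, φ i = 0 :=
          (Finset.sum_eq_zero_iff_of_nonneg fun i _ => hφnn i).mp h.symm
        obtain ⟨y₀, hy₀⟩ := hne_n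
        have hb : A *ᵥ y₀ ∈ S := ⟨y₀, hy₀, rfl⟩
        have h1 : v' < f (A *ᵥ y₀) := hfS _ hb
        have h2 : f (A *ᵥ y₀) = 0 := by
          rw [hfeq]
          exact Finset.sum_eq_zero fun i _ => by rw [hall i (mem_univ i), mul_zero]
        have h3 : f (fun _ => c) < u := hfO _ hcO
        have h4 : f (fun _ => c) = 0 := by
          rw [hfeq]
          exact Finset.sum_eq_zero fun i _ => by rw [hall i (mem_univ i), mul_zero]
        rw [h2] at h1; rw [h4] at h3
        linarith
    set x : Fin m → ℝ := (∑ i, φ i)⁻¹ • φ with hx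
    have hxmem : x ∈ stdSimplex ℝ (Fin m) := by
      constructor
      · intro i
        exact mul_nonneg (inv_nonneg.mpr hsum.le) (hφnn i)
      · simp only [hx, Pi.smul_apply, smul_eq_mul, ← Finset.mul_sum]
        exact inv_mul_cancel₀ hsum.ne'
    have hkey : ∀ y ∈ stdSimplex ℝ (Fin n), c < x ⬝ᵥ A *ᵥ y := by
      intro y hy
      have h1 : v' < f (A *ᵥ y) := hfS _ ⟨y, hy, rfl⟩
      have h2 : f (fun _ => c) < u := hfO _ hcO
      have h3 : c * ∑ i, φ i < f (A *ᵥ y) := by rw [← hfc]; linarith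
      have h4 : x ⬝ᵥ A *ᵥ y = (∑ i, φ i)⁻¹ * f (A *ᵥ y) := by
        rw [hfeq, Finset.mul_sum]
        refine Finset.sum_congr rfl fun i _ => ?_
        simp only [hx, Pi.smul_apply, smul_eq_mul]
        ring
      rw [h4]
      calc c = (∑ i, φ i)⁻¹ * (c * ∑ i, φ i) := by
            rw [mul_comm c, inv_mul_cancel_left₀ hsum.ne']
        _ < (∑ i, φ i)⁻¹ * f (A *ᵥ y) :=
            mul_lt_mul_of_pos_left h3 (inv_pos.mpr hsum)
    have hgx : c < g x := by
      rw [hg]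
      rw [Finset.lt_inf'_iff]
      intro j _
      have hsingle : Pi.single j (1:ℝ) ∈ stdSimplex ℝ (Fin n) := single_mem_stdSimplex ℝ j
      have := hkey _ hsingle
      have heq : x ⬝ᵥ A *ᵥ Pi.single j (1:ℝ) = (x ᵥ* A) j := by
        rw [hdot]
        simp [dotProduct, Pi.single_apply]
      rwa [heq] at this
    have : g x ≤ v := hxsmax hxmem
    linarith
  refine ⟨xs, hxs, ys, hys, v, ?_, ?_⟩
  · intro x hx
    calc x ⬝ᵥ A *ᵥ ys ≤ w := vn_dot_le_sup' x (A *ᵥ ys) hx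
      _ ≤ v := hwv
  · intro y hy
    rw [hdot]
    exact vn_inf'_le_dot y (xs ᵥ* A) hy

private lemma vn_pay_eq {m n : ℕ} (A : Matrix (Fin m) (Fin n) ℝ) (x : Fin m → ℝ)
    (y : Fin n → ℝ) : (∑ i, ∑ j, x i * A i j * y j) = x ⬝ᵥ A *ᵥ y := by
  simp [dotProduct, Matrix.mulVec, Finset.mul_sum, mul_assoc]

/-- Von Neumann Minimax Theorem (saddle point form): for every real m × n
matrix A (m, n ≥ 1) there exist mixed strategies x* ∈ Δ_m and y* ∈ Δ_n such
that xᵀ A y* ≤ x*ᵀ A y* ≤ x*ᵀ A y for all x ∈ Δ_m, y ∈ Δ_n; consequently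
sup_{x ∈ Δ_m} inf_{y ∈ Δ_n} xᵀ A y = inf_{y ∈ Δ_n} sup_{x ∈ Δ_m} xᵀ A y. -/
theorem von_neumann_minimax {m n : ℕ} (hm : 1 ≤ m) (hn : 1 ≤ n)
    (A : Matrix (Fin m) (Fin n) ℝ) :
    (∃ xs ∈ stdSimplex ℝ (Fin m), ∃ ys ∈ stdSimplex ℝ (Fin n),
      ∀ x ∈ stdSimplex ℝ (Fin m), ∀ y ∈ stdSimplex ℝ (Fin n),
        (∑ i, ∑ j, x i * A i j * ys j) ≤ (∑ i, ∑ j, xs i * A i j * ys j) ∧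
        (∑ i, ∑ j, xs i * A i j * ys j) ≤ ∑ i, ∑ j, xs i * A i j * y j) ∧
    (⨆ x : stdSimplex ℝ (Fin m), ⨅ y : stdSimplex ℝ (Fin n),
        ∑ i, ∑ j, (x : Fin m → ℝ) i * A i j * (y : Fin n → ℝ) j)
      = ⨅ y : stdSimplex ℝ (Fin n), ⨆ x : stdSimplex ℝ (Fin m),
          ∑ i, ∑ j, (x : Fin m → ℝ) i * A i j * (y : Fin n → ℝ) j := by
  haveI : NeZero m := ⟨by omega⟩
  haveI : NeZero n := ⟨by omega⟩
  obtain ⟨xs, hxs, ys, hys, v, h1, h2⟩ := vn_saddle A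
  have h1' : ∀ x ∈ stdSimplex ℝ (Fin m), (∑ i, ∑ j, x i * A i j * ys j) ≤ v :=
    fun x hx => (vn_pay_eq A x ys) ▸ h1 x hx
  have h2' : ∀ y ∈ stdSimplex ℝ (Fin n), v ≤ ∑ i, ∑ j, xs i * A i j * y j :=
    fun y hy => (vn_pay_eq A xs y) ▸ h2 y hy
  have hv : (∑ i, ∑ j, xs i * A i j * ys j) = v :=
    le_antisymm (h1' xs hxs) (h2' ys hys)
  constructor
  · exact ⟨xs, hxs, ys, hys, fun x hx y hy =>
      ⟨(h1' x hx).trans hv.ge, hv.le.trans (h2' y hy)⟩⟩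
  · haveI hm' : Nonempty ↥(stdSimplex ℝ (Fin m)) :=
      ⟨⟨_, single_mem_stdSimplex ℝ (Classical.arbitrary (Fin m))⟩⟩
    haveI hn' : Nonempty ↥(stdSimplex ℝ (Fin n)) :=
      ⟨⟨_, single_mem_stdSimplex ℝ (Classical.arbitrary (Fin n))⟩⟩
    set M : ℝ := ∑ i, ∑ j, |A i j| with hM
    have hle1 : ∀ {k : ℕ} (x : Fin k → ℝ), x ∈ stdSimplex ℝ (Fin k) → ∀ i, x i ≤ 1 :=
      fun x hx i => hx.2 ▸ Finset.single_le_sum (fun j _ => hx.1 j) (mem_univ i)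
    have hb : ∀ x ∈ stdSimplex ℝ (Fin m), ∀ y ∈ stdSimplex ℝ (Fin n),
        |∑ i, ∑ j, x i * A i j * y j| ≤ M := by
      intro x hx y hy
      calc |∑ i, ∑ j, x i * A i j * y j| ≤ ∑ i, |∑ j, x i * A i j * y j| :=
            Finset.abs_sum_le_sum_abs _ _
        _ ≤ ∑ i, ∑ j, |x i * A i j * y j| :=
            Finset.sum_le_sum fun i _ => Finset.abs_sum_le_sum_abs _ _
        _ ≤ M := by
            rw [hM]
            refine Finset.sum_le_sum fun i _ => Finset.sum_le_sum fun j _ => ?_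
            rw [abs_mul, abs_mul, abs_of_nonneg (hx.1 i), abs_of_nonneg (hy.1 j)]
            calc x i * |A i j| * y j ≤ 1 * |A i j| * 1 := by
                  refine mul_le_mul (mul_le_mul_of_nonneg_right (hle1 x hx i)
                    (abs_nonneg _)) (hle1 y hy j) (hy.1 j) (by positivity)
              _ = |A i j| := by ring
    set F : ↥(stdSimplex ℝ (Fin m)) → ↥(stdSimplex ℝ (Fin n)) → ℝ :=
      fun x y => ∑ i, ∑ j, (x : Fin m → ℝ) i * A i j * (y : Fin n → ℝ) j with hF
    have hbdd1 : ∀ x, BddBelow (Set.range (F x)) := by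
      intro x
      refine ⟨-M, ?_⟩
      rintro r ⟨y, rfl⟩
      exact neg_le_of_abs_le (hb x x.2 y y.2)
    have hbdd2 : ∀ y, BddAbove (Set.range fun x => F x y) := by
      intro y
      refine ⟨M, ?_⟩
      rintro r ⟨x, rfl⟩
      exact le_of_abs_le (hb x x.2 y y.2)
    have hbddA : BddAbove (Set.range fun x => ⨅ y, F x y) := by
      refine ⟨M, ?_⟩
      rintro r ⟨x, rfl⟩
      exact (ciInf_le (hbdd1 x) ⟨ys, hys⟩).trans (le_of_abs_le (hb x x.2 ys hys))
    have hbddB : BddBelow (Set.range fun y => ⨆ x, F x y) := by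
      refine ⟨-M, ?_⟩
      rintro r ⟨y, rfl⟩
      exact le_ciSup_of_le (hbdd2 y) ⟨xs, hxs⟩ (neg_le_of_abs_le (hb xs hxs y y.2))
    have hA1 : (⨆ x, ⨅ y, F x y) ≤ v :=
      ciSup_le fun x => (ciInf_le (hbdd1 x) ⟨ys, hys⟩).trans (h1' x x.2)
    have hA2 : v ≤ ⨆ x, ⨅ y, F x y :=
      le_ciSup_of_le hbddA ⟨xs, hxs⟩ (le_ciInf fun y => h2' y y.2)
    have hB1 : v ≤ ⨅ y, ⨆ x, F x y :=
      le_ciInf fun y => le_ciSup_of_le (hbdd2 y) ⟨xs, hxs⟩ (h2' y y.2)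
    have hB2 : (⨅ y, ⨆ x, F x y) ≤ v :=
      ciInf_le_of_le hbddB ⟨ys, hys⟩ (ciSup_le fun x => h1' x x.2)
    exact le_antisymm (hA1.trans hB1) (hB2.trans hA2)
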